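/- Let n ≥ 2 and let B be the closed unit ball in ℝⁿ. There is no constant C > 0 such that |𝟙̂_B(ξ)| ≤ C ∫₀^{1/|ξ|} r^{n−1} dr = C n^{−1} |ξ|^{−n} for all ξ ≠ 0; equivalently, sup_{ξ ≠ 0} |ξ|ⁿ |𝟙̂_B(ξ)| = ∞. (Hence the monotonicity hypothesis cannot be dropped from the bound |f̂(ξ)| ≲ ∫₀^{1/|ξ|} r^{n−1} f₀(r) dr for radial f.) -/

import Mathlib

open MeasureTheory Filter Metric Complex Real
set_option maxHeartbeats 1000000
open scoped ENNReal FourierTransform Convolution RealInnerProductSpace Pointwise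

variable {V : Type*} [NormedAddCommGroup V] [InnerProductSpace ℝ V] [FiniteDimensional ℝ V]
  [MeasurableSpace V] [BorelSpace V]

lemma ftconv (f : V → ℂ) (hf : Integrable f) (ξ : V) :
    𝓕 (f ⋆[ContinuousLinearMap.mul ℝ ℂ, volume] f) ξ = 𝓕 f ξ * 𝓕 f ξ := by
  set e : V → ℂ := fun x => Complex.exp ((-2 * π * ⟪x, ξ⟫ : ℝ) * Complex.I) with he
  have he_norm : ∀ x, ‖e x‖ = 1 := fun x => Complex.norm_exp_ofReal_mul_I _
  have he_add : ∀ x y : V, e (x + y) = e x * e y := by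
    intro x y
    have h2 : ((-2 * π * ⟪x + y, ξ⟫ : ℝ) : ℂ) * Complex.I
        = ((-2 * π * ⟪x, ξ⟫ : ℝ) : ℂ) * Complex.I + ((-2 * π * ⟪y, ξ⟫ : ℝ) : ℂ) * Complex.I := by
      rw [inner_add_left]
      push_cast
      ring
    simp only [he, h2, Complex.exp_add]
  have hFT : ∀ h : V → ℂ, 𝓕 h ξ = ∫ x, e x * h x := by
    intro h
    rw [Real.fourier_eq']
    simp only [smul_eq_mul, he]
  have base : Integrable (fun p : V × V => f p.2 * f (p.1 - p.2)) (volume.prod volume) := by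
    have := hf.convolution_integrand (ContinuousLinearMap.mul ℝ ℂ) hf
    simpa using this
  have hF : Integrable (fun p : V × V => e p.1 * (f p.2 * f (p.1 - p.2)))
      (volume.prod volume) := by
    apply base.bdd_mul
    · exact ((Complex.continuous_ofReal.comp
        ((continuous_const.mul ((continuous_inner.comp
          (continuous_fst.prodMk continuous_const)))))).mul continuous_const).cexp.aestronglyMeasurable
    · exact Eventually.of_forall fun x => le_of_eq (he_norm x.1)
  calc 𝓕 (f ⋆[ContinuousLinearMap.mul ℝ ℂ, volume] f) ξ
      = ∫ x, e x * ∫ y, f y * f (x - y) := by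
        rw [hFT]
        apply integral_congr_ae
        filter_upwards with x
        rw [convolution_def]
        simp [ContinuousLinearMap.mul_apply']
    _ = ∫ x, ∫ y, e x * (f y * f (x - y)) := by
        apply integral_congr_ae
        filter_upwards with x
        rw [integral_const_mul]
    _ = ∫ y, ∫ x, e x * (f y * f (x - y)) := integral_integral_swap hF
    _ = ∫ y, f y * (e y * 𝓕 f ξ) := by
        apply integral_congr_ae
        filter_upwards with y
        have sub : (∫ x, e x * f (x - y)) = e y * ∫ x, e x * f x := by
          have := MeasureTheory.integral_add_right_eq_self (μ := volume) (fun x => e x * f (x - y)) y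
          rw [← this]
          simp only [add_sub_cancel_right]
          simp_rw [he_add, mul_comm (e _) (e y), mul_assoc]
          rw [integral_const_mul]
        calc (∫ x, e x * (f y * f (x - y))) = f y * ∫ x, e x * f (x - y) := by
              rw [← integral_const_mul]
              apply integral_congr_ae
              filter_upwards with x
              ring
          _ = f y * (e y * 𝓕 f ξ) := by rw [sub, hFT]
    _ = (∫ y, e y * f y) * 𝓕 f ξ := by
        rw [← integral_mul_const]
        apply integral_congr_ae
        filter_upwards with y
        ring
    _ = 𝓕 f ξ * 𝓕 f ξ := by rw [← hFT]

lemma mcont [Nontrivial V] :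
    Continuous (fun x : V => (volume (closedBall (0:V) 1 ∩ closedBall x 1)).toReal) := by
  set ν := (volume : Measure V) with hν
  set k := Module.finrank ℝ V with hk
  set β := (ν (ball (0:V) 1)).toReal with hβ
  set m := fun x : V => (ν (closedBall (0:V) 1 ∩ closedBall x 1)).toReal with hm
  have hfin : ∀ (x : V), ν (closedBall (0:V) 1 ∩ closedBall x 1) ≠ ∞ := fun x =>
    (lt_of_le_of_lt (measure_mono Set.inter_subset_left) measure_closedBall_lt_top).ne
  have key : ∀ x y : V, m x - m y ≤ ((1 + dist x y) ^ k - 1) * β := by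
    intro x y
    set d := dist x y with hd
    have hd0 : 0 ≤ d := dist_nonneg
    have hsub : closedBall (0:V) 1 ∩ closedBall x 1 ⊆
        (closedBall (0:V) 1 ∩ closedBall y 1) ∪ (closedBall y (1+d) \ ball y 1) := by
      intro z hz
      by_cases hzy : z ∈ ball y 1
      · exact Or.inl ⟨hz.1, ball_subset_closedBall hzy⟩
      · refine Or.inr ⟨?_, hzy⟩
        have h1 : dist z x ≤ 1 := mem_closedBall.1 hz.2
        have h2 : dist z y ≤ dist z x + dist x y := dist_triangle z x y
        exact mem_closedBall.2 (by linarith)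
    have hEN : ν (closedBall (0:V) 1 ∩ closedBall x 1)
        ≤ ν (closedBall (0:V) 1 ∩ closedBall y 1) + ν (closedBall y (1+d) \ ball y 1) :=
      (measure_mono hsub).trans (measure_union_le _ _)
    have hbsub : ball y 1 ⊆ closedBall y (1+d) :=
      ball_subset_closedBall.trans (closedBall_subset_closedBall (by linarith))
    have hcb : ν (closedBall y (1+d)) = ENNReal.ofReal ((1+d) ^ k) * ν (ball (0:V) 1) :=
      Measure.addHaar_closedBall ν y (by linarith)
    have hba : ν (ball y 1) = ν (ball (0:V) 1) := by
      rw [Measure.addHaar_ball ν y (by norm_num : (0:ℝ) ≤ 1)]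
      simp
    have hdiff : ν (closedBall y (1+d) \ ball y 1)
        = ENNReal.ofReal ((1+d) ^ k) * ν (ball (0:V) 1) - ν (ball (0:V) 1) := by
      rw [measure_diff hbsub measurableSet_ball.nullMeasurableSet measure_ball_lt_top.ne,
        hcb, hba]
    have hb1 : ν (ball (0:V) 1) ≠ ∞ := measure_ball_lt_top.ne
    have hle : ν (ball (0:V) 1) ≤ ENNReal.ofReal ((1+d) ^ k) * ν (ball (0:V) 1) := by
      refine le_mul_of_one_le_left (zero_le) ?_
      rw [← ENNReal.ofReal_one]
      exact ENNReal.ofReal_le_ofReal (one_le_pow₀ (by linarith))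
    have hDfin : ENNReal.ofReal ((1+d) ^ k) * ν (ball (0:V) 1) ≠ ∞ :=
      (ENNReal.mul_lt_top ENNReal.ofReal_lt_top measure_ball_lt_top).ne
    have hDto : (ν (closedBall y (1+d) \ ball y 1)).toReal = ((1+d) ^ k - 1) * β := by
      rw [hdiff, ENNReal.toReal_sub_of_le hle hDfin, ENNReal.toReal_mul,
        ENNReal.toReal_ofReal (by positivity)]
      ring
    have := ENNReal.toReal_mono (by
        rw [ENNReal.add_ne_top]
        exact ⟨hfin y, hdiff ▸ (lt_of_le_of_lt (le_trans tsub_le_self le_rfl) hDfin.lt_top).ne⟩) hEN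
    rw [ENNReal.toReal_add (hfin y) (by rw [hdiff]; exact (lt_of_le_of_lt tsub_le_self hDfin.lt_top).ne),
      hDto] at this
    simp only [hm]
    linarith
  rw [continuous_iff_continuousAt]
  intro v
  rw [ContinuousAt, tendsto_iff_dist_tendsto_zero]
  apply squeeze_zero (fun x => dist_nonneg)
  · intro x
    rw [Real.dist_eq, abs_sub_le_iff]
    constructor
    · exact key x v
    · have := key v x
      rwa [dist_comm] at this
  · have hcont : Continuous fun x : V => ((1 + dist x v) ^ k - 1) * β := by
      have : Continuous fun x : V => dist x v := continuous_id.dist continuous_const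
      fun_prop
    have := hcont.tendsto v
    simpa using this

lemma geom_pos (u : V) (hu : ‖u‖ = 1) :
    0 < (volume (closedBall (0:V) 1 ∩ {x : V | ⟪u, x⟫ ≤ -(1/2)})).toReal := by
  set A := closedBall (0:V) 1 ∩ {x : V | ⟪u, x⟫ ≤ -(1/2)} with hA
  set p : V := -((3/4 : ℝ) • u) with hp
  have hpn : ‖p‖ = 3/4 := by
    rw [hp, norm_neg, norm_smul, hu]
    norm_num
  have hsub : ball p (1/8) ⊆ A := by
    intro x hx
    have hxp : ‖x - p‖ < 1/8 := by
      rw [← dist_eq_norm]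
      exact mem_ball.1 hx
    constructor
    · rw [mem_closedBall_zero_iff]
      calc ‖x‖ = ‖(x - p) + p‖ := by rw [sub_add_cancel]
        _ ≤ ‖x - p‖ + ‖p‖ := norm_add_le _ _
        _ ≤ 1 := by rw [hpn]; linarith
    · have h1 : ⟪u, x - p⟫ ≤ 1/8 := by
        calc ⟪u, x - p⟫ ≤ ‖u‖ * ‖x - p‖ := real_inner_le_norm _ _
          _ ≤ 1/8 := by rw [hu, one_mul]; linarith
      have h2 : ⟪u, p⟫ = -(3/4) := by
        rw [hp, inner_neg_right, real_inner_smul_right, real_inner_self_eq_norm_sq, hu]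
        norm_num
      have h3 : ⟪u, x⟫ = ⟪u, x - p⟫ + ⟪u, p⟫ := by
        rw [inner_sub_right]; ring
      show ⟪u, x⟫ ≤ -(1/2)
      rw [h3, h2]; linarith
  have hpos : 0 < volume A :=
    lt_of_lt_of_le (measure_ball_pos volume p (by norm_num)) (measure_mono hsub)
  have hfin : volume A < ∞ :=
    lt_of_le_of_lt (measure_mono Set.inter_subset_left) measure_closedBall_lt_top
  exact ENNReal.toReal_pos hpos.ne' hfin.ne

lemma geom (u : V) (hu : ‖u‖ = 1) (hdim : 2 ≤ Module.finrank ℝ V) {t : ℝ}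
    (ht : 0 < t) (ht2 : t ≤ 1/2) :
    (volume (closedBall (0:V) 1 ∩ closedBall (t • u) 1)).toReal
      ≤ (volume (closedBall (0:V) 1)).toReal
        - t * (volume (closedBall (0:V) 1 ∩ {x : V | ⟪u, x⟫ ≤ -(1/2)})).toReal := by
  set ν := (volume : Measure V) with hν
  set k := Module.finrank ℝ V with hk
  set A := closedBall (0:V) 1 ∩ {x : V | ⟪u, x⟫ ≤ -(1/2)} with hA
  have hAclosed : IsClosed A :=
    Metric.isClosed_closedBall.inter (isClosed_le (continuous_const.inner continuous_id) continuous_const)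
  have hAmeas : MeasurableSet A := hAclosed.measurableSet
  have hAfin : ν A ≠ ∞ :=
    (lt_of_le_of_lt (measure_mono Set.inter_subset_left) measure_closedBall_lt_top).ne
  set r := Real.sqrt (1 - t) with hr
  have hr0 : 0 < r := Real.sqrt_pos.2 (by linarith)
  have hr1 : r ≤ 1 := by
    rw [hr]
    exact Real.sqrt_le_one.2 (by linarith)
  have hr2 : r ^ 2 = 1 - t := Real.sq_sqrt (by linarith)
  set Ar := A ∩ closedBall (0:V) r with hAr
  have hArmeas : MeasurableSet Ar := hAmeas.inter measurableSet_closedBall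
  have hArfin : ν Ar ≠ ∞ :=
    (lt_of_le_of_lt (measure_mono Set.inter_subset_left) hAfin.lt_top).ne
  have hArsmul : Ar ⊆ r • A := by
    intro x hx
    rw [Set.mem_smul_set_iff_inv_smul_mem₀ hr0.ne']
    have hxr : ‖x‖ ≤ r := mem_closedBall_zero_iff.1 hx.2
    have hinv : 1 ≤ r⁻¹ := by rw [le_inv_comm₀ (by norm_num) hr0]; simpa using hr1
    have hxc : ⟪u, x⟫ ≤ -(1/2) := hx.1.2
    constructor
    · rw [mem_closedBall_zero_iff, norm_smul, norm_inv, Real.norm_eq_abs, abs_of_pos hr0]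
      calc r⁻¹ * ‖x‖ ≤ r⁻¹ * r := by
            apply mul_le_mul_of_nonneg_left hxr (by positivity)
        _ = 1 := inv_mul_cancel₀ hr0.ne'
    · show ⟪u, r⁻¹ • x⟫ ≤ -(1/2)
      rw [real_inner_smul_right]
      nlinarith
  have hAr_le : ν Ar ≤ ENNReal.ofReal (r ^ k) * ν A :=
    (measure_mono hArsmul).trans_eq (Measure.addHaar_smul_of_nonneg ν hr0.le A)
  set T := A \ Ar with hT
  have hTmeas : MeasurableSet T := hAmeas.diff hArmeas
  have hTsub : T ⊆ closedBall (0:V) 1 \ closedBall (t • u) 1 := by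
    rintro x ⟨hxA, hxnAr⟩
    have hx1 : ‖x‖ ≤ 1 := mem_closedBall_zero_iff.1 hxA.1
    have hxc : ⟪u, x⟫ ≤ -(1/2) := hxA.2
    have hxgt : r < ‖x‖ := by
      by_contra hcon
      push_neg at hcon
      exact hxnAr ⟨hxA, mem_closedBall_zero_iff.2 hcon⟩
    refine ⟨hxA.1, fun hmem => ?_⟩
    have hd : ‖x - t • u‖ ≤ 1 := mem_closedBall_iff_norm.1 hmem
    have hexp : ‖x - t • u‖ ^ 2 = ‖x‖ ^ 2 - 2 * ⟪x, t • u⟫ + ‖t • u‖ ^ 2 :=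
      norm_sub_sq_real x (t • u)
    have hip : ⟪x, t • u⟫ = t * ⟪u, x⟫ := by
      rw [real_inner_smul_right, real_inner_comm]
    have htu : ‖t • u‖ = t := by
      rw [norm_smul, hu, Real.norm_eq_abs, abs_of_pos ht, mul_one]
    have hx2 : 1 - t < ‖x‖ ^ 2 := by
      rw [← hr2]
      exact pow_lt_pow_left₀ hxgt hr0.le (by norm_num)
    rw [hip, htu] at hexp
    nlinarith [norm_nonneg (x - t • u)]
  have hTvol : ν T = ν A - ν Ar :=
    measure_diff Set.inter_subset_left hArmeas.nullMeasurableSet hArfin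
  have hdisj : Disjoint (closedBall (0:V) 1 ∩ closedBall (t • u) 1) T := by
    rw [Set.disjoint_right]
    intro x hxT hxI
    exact (hTsub hxT).2 hxI.2
  have hunion : ν (closedBall (0:V) 1 ∩ closedBall (t • u) 1) + ν T ≤ ν (closedBall (0:V) 1) := by
    rw [← measure_union hdisj hTmeas]
    apply measure_mono
    rintro x (hx | hx)
    · exact hx.1
    · exact (hTsub hx).1
  -- pass to reals
  have hIfin : ν (closedBall (0:V) 1 ∩ closedBall (t • u) 1) ≠ ∞ :=
    (lt_of_le_of_lt (measure_mono Set.inter_subset_left) measure_closedBall_lt_top).ne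
  have hTfin : ν T ≠ ∞ := (lt_of_le_of_lt (measure_mono Set.diff_subset) hAfin.lt_top).ne
  have hBfin : ν (closedBall (0:V) 1) ≠ ∞ := measure_closedBall_lt_top.ne
  have h1 : (ν (closedBall (0:V) 1 ∩ closedBall (t • u) 1)).toReal + (ν T).toReal
      ≤ (ν (closedBall (0:V) 1)).toReal := by
    rw [← ENNReal.toReal_add hIfin hTfin]
    exact ENNReal.toReal_mono hBfin hunion
  have h2 : (ν T).toReal = (ν A).toReal - (ν Ar).toReal := by
    rw [hTvol, ENNReal.toReal_sub_of_le (measure_mono Set.inter_subset_left) hAfin]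
  have h3 : (ν Ar).toReal ≤ (1 - t) * (ν A).toReal := by
    have := ENNReal.toReal_mono
      ((ENNReal.mul_lt_top ENNReal.ofReal_lt_top hAfin.lt_top).ne) hAr_le
    rw [ENNReal.toReal_mul, ENNReal.toReal_ofReal (by positivity)] at this
    have hrk : r ^ k ≤ 1 - t := by
      rw [← hr2]
      exact pow_le_pow_of_le_one hr0.le hr1 hdim
    have hApos : 0 ≤ (ν A).toReal := ENNReal.toReal_nonneg
    nlinarith
  linarith

theorem stmt7 (n : ℕ) (hn : 2 ≤ n) :
    ∀ C : ℝ, ∃ ξ : EuclideanSpace ℝ (Fin n), ξ ≠ 0 ∧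
      C < ‖ξ‖ ^ n *
        ‖𝓕 (Set.indicator (Metric.closedBall (0 : EuclideanSpace ℝ (Fin n)) 1)
            (fun _ => (1 : ℂ))) ξ‖ := by
  by_contra hcon
  push_neg at hcon
  obtain ⟨C, hC⟩ := hcon
  set f : EuclideanSpace ℝ (Fin n) → ℂ :=
    Set.indicator (Metric.closedBall (0 : EuclideanSpace ℝ (Fin n)) 1) (fun _ => (1 : ℂ)) with hf
  have i0 : Fin n := ⟨0, by omega⟩
  set u : EuclideanSpace ℝ (Fin n) := EuclideanSpace.single i0 1 with hudef
  have hu : ‖u‖ = 1 := by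
    rw [hudef, EuclideanSpace.norm_single]
    norm_num
  haveI : Nontrivial (EuclideanSpace ℝ (Fin n)) :=
    nontrivial_of_ne u 0 (fun h => by rw [h, norm_zero] at hu; norm_num at hu)
  have hdim : Module.finrank ℝ (EuclideanSpace ℝ (Fin n)) = n := finrank_euclideanSpace_fin
  -- basic properties of f
  have hfint : Integrable f := by
    rw [hf]
    rw [integrable_indicator_iff measurableSet_closedBall]
    exact integrableOn_const measure_closedBall_lt_top.ne
  set g := f ⋆[ContinuousLinearMap.mul ℝ ℂ, volume] f with hg
  have hgint : Integrable g := hfint.integrable_convolution _ hfint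
  have hFg : ∀ ξ, 𝓕 g ξ = 𝓕 f ξ * 𝓕 f ξ := ftconv f hfint
  -- pointwise value of g
  set m : EuclideanSpace ℝ (Fin n) → ℝ :=
    fun x => (volume (closedBall (0 : EuclideanSpace ℝ (Fin n)) 1 ∩ closedBall x 1)).toReal
    with hmdef
  have hgval : ∀ x, g x = (m x : ℂ) := by
    intro x
    rw [hg, convolution_def]
    have hptwise : ∀ y, (ContinuousLinearMap.mul ℝ ℂ) (f y) (f (x - y))
        = Set.indicator (closedBall (0 : EuclideanSpace ℝ (Fin n)) 1 ∩ closedBall x 1)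
          (fun _ => (1 : ℂ)) y := by
      intro y
      have h3 : x - y ∈ closedBall (0 : EuclideanSpace ℝ (Fin n)) 1 ↔ y ∈ closedBall x 1 := by
        rw [mem_closedBall_zero_iff, mem_closedBall, dist_eq_norm, norm_sub_rev]
      by_cases h2 : y ∈ closedBall x 1
      · have h2' := h3.2 h2
        by_cases h1 : y ∈ closedBall (0 : EuclideanSpace ℝ (Fin n)) 1 <;>
          simp [hf, ContinuousLinearMap.mul_apply', Set.indicator_apply, h1, h2, h2',
            Set.mem_inter_iff]
      · have h2' : x - y ∉ closedBall (0 : EuclideanSpace ℝ (Fin n)) 1 := fun hh => h2 (h3.1 hh)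
        by_cases h1 : y ∈ closedBall (0 : EuclideanSpace ℝ (Fin n)) 1 <;>
          simp [hf, ContinuousLinearMap.mul_apply', Set.indicator_apply, h1, h2, h2',
            Set.mem_inter_iff]
    rw [integral_congr_ae (Filter.Eventually.of_forall hptwise),
      integral_indicator_const (1 : ℂ) (measurableSet_closedBall.inter measurableSet_closedBall)]
    simp [hmdef, Complex.real_smul, measureReal_def]
  have hgcont : Continuous g := by
    rw [show g = fun x => (m x : ℂ) from funext hgval]
    exact Complex.continuous_ofReal.comp mcont
  -- decay bounds
  set M : ℝ := ∫ y, ‖f y‖ with hM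
  have hMb : ∀ ξ, ‖𝓕 f ξ‖ ≤ M := fun ξ =>
    VectorFourier.norm_fourierIntegral_le_integral_norm _ _ _ _ _
  have contFf : Continuous (𝓕 f) :=
    VectorFourier.fourierIntegral_continuous Real.continuous_fourierChar
      (by exact continuous_inner) hfint
  have contFg : Continuous (𝓕 g) :=
    VectorFourier.fourierIntegral_continuous Real.continuous_fourierChar
      (by exact continuous_inner) hgint
  set K : ℝ := 2 ^ (n + 2) * (M ^ 2 + C ^ 2 + 1) with hK
  have hkey : ∀ ξ : EuclideanSpace ℝ (Fin n), (1 + ‖ξ‖) ^ (n + 2) * ‖𝓕 f ξ‖ ^ 2 ≤ K := by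
    intro ξ
    have h2pos : (0:ℝ) < 2 ^ (n + 2) := by positivity
    rcases le_or_gt ‖ξ‖ 1 with hs | hs
    · have e1 : (1 + ‖ξ‖) ^ (n + 2) ≤ 2 ^ (n + 2) :=
        pow_le_pow_left₀ (by positivity) (by linarith) _
      have e2 : ‖𝓕 f ξ‖ ^ 2 ≤ M ^ 2 := pow_le_pow_left₀ (norm_nonneg _) (hMb ξ) 2
      have e3 : (1 + ‖ξ‖) ^ (n + 2) * ‖𝓕 f ξ‖ ^ 2 ≤ 2 ^ (n + 2) * M ^ 2 :=
        mul_le_mul e1 e2 (by positivity) (by positivity)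
      nlinarith [sq_nonneg C]
    · have hne : ξ ≠ 0 := fun h => by rw [h, norm_zero] at hs; norm_num at hs
      have hsn : (0:ℝ) < ‖ξ‖ ^ n := by positivity
      have hFf : ‖𝓕 f ξ‖ ≤ C / ‖ξ‖ ^ n := by
        rw [le_div_iff₀ hsn, mul_comm]
        exact hC ξ hne
      have hsq : ‖𝓕 f ξ‖ ^ 2 ≤ (C / ‖ξ‖ ^ n) ^ 2 := pow_le_pow_left₀ (norm_nonneg _) hFf 2
      have h1s : (1 + ‖ξ‖) ^ (n + 2) ≤ (2 * ‖ξ‖) ^ (n + 2) :=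
        pow_le_pow_left₀ (by positivity) (by linarith) _
      have e3 : (1 + ‖ξ‖) ^ (n + 2) * ‖𝓕 f ξ‖ ^ 2
          ≤ (2 * ‖ξ‖) ^ (n + 2) * (C / ‖ξ‖ ^ n) ^ 2 :=
        mul_le_mul h1s hsq (by positivity) (by positivity)
      have e4 : (2 * ‖ξ‖) ^ (n + 2) * (C / ‖ξ‖ ^ n) ^ 2
          = 2 ^ (n + 2) * C ^ 2 * (‖ξ‖ ^ (n + 2) / ‖ξ‖ ^ (n * 2)) := by
        rw [mul_pow, div_pow, ← pow_mul]
        ring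
      have e5 : ‖ξ‖ ^ (n + 2) / ‖ξ‖ ^ (n * 2) ≤ 1 := by
        rw [div_le_one (by positivity)]
        exact pow_le_pow_right₀ hs.le (by omega)
      have e6 : (2:ℝ) ^ (n + 2) * C ^ 2 * (‖ξ‖ ^ (n + 2) / ‖ξ‖ ^ (n * 2))
          ≤ 2 ^ (n + 2) * C ^ 2 :=
        mul_le_of_le_one_right (by positivity) e5
      nlinarith [sq_nonneg M]
  -- integrability of the FT of g with weight
  have hrpow : ∀ ξ : EuclideanSpace ℝ (Fin n),
      ((1:ℝ) + ‖ξ‖) ^ (-((n:ℝ) + 1)) = ((1 + ‖ξ‖) ^ (n + 1))⁻¹ := by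
    intro ξ
    rw [Real.rpow_neg (by positivity),
      show ((n:ℝ) + 1) = ((n + 1 : ℕ) : ℝ) by push_cast; ring, Real.rpow_natCast]
  have hdomint : Integrable
      (fun ξ : EuclideanSpace ℝ (Fin n) => K * ((1:ℝ) + ‖ξ‖) ^ (-((n:ℝ) + 1))) := by
    apply Integrable.const_mul
    apply integrable_one_add_norm
    rw [hdim]
    push_cast
    linarith
  have hint1 : Integrable (fun ξ : EuclideanSpace ℝ (Fin n) => (1 + ‖ξ‖) * ‖𝓕 g ξ‖) := by
    apply hdomint.mono'
    · exact ((continuous_const.add continuous_norm).mul contFg.norm).aestronglyMeasurable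
    · filter_upwards with ξ
      have hnn : (0:ℝ) ≤ (1 + ‖ξ‖) * ‖𝓕 g ξ‖ := by positivity
      rw [Real.norm_of_nonneg hnn, hrpow ξ]
      have hb : (0:ℝ) < (1 + ‖ξ‖) ^ (n + 1) := by positivity
      rw [← div_eq_mul_inv, le_div_iff₀ hb]
      have : (1 + ‖ξ‖) * ‖𝓕 g ξ‖ * (1 + ‖ξ‖) ^ (n + 1)
          = (1 + ‖ξ‖) ^ (n + 2) * ‖𝓕 f ξ‖ ^ 2 := by
        rw [hFg ξ, norm_mul]
        ring
      rw [this]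
      exact hkey ξ
  have hFgint : Integrable (𝓕 g) := by
    apply hint1.mono' contFg.aestronglyMeasurable
    filter_upwards with ξ
    exact le_mul_of_one_le_left (norm_nonneg _) (by linarith [norm_nonneg ξ])
  have hmom : Integrable (fun ξ : EuclideanSpace ℝ (Fin n) => ‖ξ‖ * ‖𝓕 g ξ‖) := by
    apply hint1.mono'
    · exact (continuous_norm.mul contFg.norm).aestronglyMeasurable
    · filter_upwards with ξ
      rw [Real.norm_of_nonneg (by positivity : (0:ℝ) ≤ ‖ξ‖ * ‖𝓕 g ξ‖)]
      have : (0:ℝ) ≤ ‖𝓕 g ξ‖ := norm_nonneg _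
      nlinarith [norm_nonneg ξ]
  -- g is differentiable
  have hdiffF : Differentiable ℝ (𝓕 (𝓕 g)) := Real.differentiable_fourier hFgint hmom
  have hinv : 𝓕⁻ (𝓕 g) = g := hgcont.fourierInv_fourier_eq hgint hFgint
  have hgdiff : Differentiable ℝ g := by
    rw [← hinv]
    have heq : (𝓕⁻ (𝓕 g)) = fun x => (𝓕 (𝓕 g)) (-x) :=
      funext fun x => Real.fourierInv_eq_fourier_neg _ _
    rw [heq]
    exact hdiffF.comp differentiable_id.neg
  -- g is even
  have hfeven : ∀ y, f (-y) = f y := by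
    intro y
    rw [hf]
    by_cases h : y ∈ closedBall (0 : EuclideanSpace ℝ (Fin n)) 1
    · have h' : -y ∈ closedBall (0 : EuclideanSpace ℝ (Fin n)) 1 := by
        rw [mem_closedBall_zero_iff] at h ⊢
        rwa [norm_neg]
      simp [Set.indicator_apply, h, h']
    · have h' : -y ∉ closedBall (0 : EuclideanSpace ℝ (Fin n)) 1 := by
        rw [mem_closedBall_zero_iff] at h ⊢
        rwa [norm_neg]
      simp [Set.indicator_apply, h, h']
  have hgeven : ∀ x, g (-x) = g x := by
    intro x
    rw [hg, convolution_def, convolution_def]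
    rw [← MeasureTheory.integral_neg_eq_self
      (fun y => (ContinuousLinearMap.mul ℝ ℂ) (f y) (f (-x - y))) volume]
    apply integral_congr_ae
    filter_upwards with y
    have e1 : -x - -y = -(x - y) := by abel
    simp only [e1, hfeven y, hfeven (x - y)]
  -- derivative of g at 0 is 0
  have hD : HasFDerivAt g (fderiv ℝ g 0) 0 := (hgdiff 0).hasFDerivAt
  have hzero : fderiv ℝ g 0 = 0 := by
    have h1 : HasFDerivAt (fun x : EuclideanSpace ℝ (Fin n) => -x)
        (-(ContinuousLinearMap.id ℝ (EuclideanSpace ℝ (Fin n)))) 0 :=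
      (hasFDerivAt_id (0 : EuclideanSpace ℝ (Fin n))).neg
    have h2 : HasFDerivAt (g ∘ fun x : EuclideanSpace ℝ (Fin n) => -x)
        ((fderiv ℝ g 0).comp (-(ContinuousLinearMap.id ℝ (EuclideanSpace ℝ (Fin n))))) 0 := by
      apply HasFDerivAt.comp
      · simpa using hD
      · exact h1
    have h3 : (g ∘ fun x : EuclideanSpace ℝ (Fin n) => -x) = g := funext fun x => hgeven x
    rw [h3] at h2
    have h4 := hD.unique h2
    ext v
    have h5 := DFunLike.congr_fun h4 v
    simp only [ContinuousLinearMap.comp_apply, ContinuousLinearMap.neg_apply,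
      ContinuousLinearMap.id_apply, map_neg] at h5
    simp only [ContinuousLinearMap.zero_apply]
    have h6 : (2:ℂ) * (fderiv ℝ g 0 v) = 0 := by linear_combination h5
    rcases mul_eq_zero.1 h6 with h7 | h7
    · norm_num at h7
    · exact h7
  -- little-o estimate
  have hlittle := hasFDerivAt_iff_isLittleO_nhds_zero.1 (hzero ▸ hD)
  simp only [zero_add, ContinuousLinearMap.zero_apply, sub_zero] at hlittle
  have hd : 0 < (volume (closedBall (0 : EuclideanSpace ℝ (Fin n)) 1
      ∩ {x | ⟪u, x⟫ ≤ -(1/2)})).toReal := geom_pos u hu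
  set d := (volume (closedBall (0 : EuclideanSpace ℝ (Fin n)) 1
      ∩ {x | ⟪u, x⟫ ≤ -(1/2)})).toReal with hddef
  have hev := hlittle.def (show (0:ℝ) < d/2 by linarith)
  rw [Metric.eventually_nhds_iff] at hev
  obtain ⟨ε, hε, hball⟩ := hev
  set t := min (ε/2) (1/2) with htdef
  have ht0 : 0 < t := lt_min (by linarith) (by norm_num)
  have ht2 : t ≤ 1/2 := min_le_right _ _
  have htε : t < ε := lt_of_le_of_lt (min_le_left _ _) (by linarith)
  have hnorm : ‖t • u‖ = t := by
    rw [norm_smul, hu, mul_one, Real.norm_eq_abs, abs_of_pos ht0]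
  have hx := hball (show dist (t • u) (0 : EuclideanSpace ℝ (Fin n)) < ε by
    rw [dist_zero_right, hnorm]; exact htε)
  have hg0 : g 0 = ((volume (closedBall (0 : EuclideanSpace ℝ (Fin n)) 1)).toReal : ℂ) := by
    rw [hgval 0]
    simp [hmdef]
  have hgeom := geom u hu (by rw [hdim]; exact hn) ht0 ht2
  set W := (volume (closedBall (0 : EuclideanSpace ℝ (Fin n)) 1)).toReal with hWdef
  have hmle : m (t • u) ≤ W - t * d := hgeom
  have hxval : ‖g (t • u) - g 0‖ = |m (t • u) - W| := by
    rw [hgval (t • u), hg0, ← Complex.ofReal_sub, Complex.norm_real, Real.norm_eq_abs]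
  have hxabs : |m (t • u) - W| ≥ t * d := by
    rw [abs_of_nonpos (by nlinarith)]
    nlinarith
  rw [hxval, hnorm] at hx
  nlinarith
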